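/- arXiv:1505.02032 — 4 statements merged into one kernel-verified Lean document; each statement's English description precedes it below -/
import Mathlib

section
/- Let g, k > 0, σ = 0, ε ∈ (0,1], U₀ ≥ 0, μ ∈ ℝ. The quadratic equation g(1-ε) = ε(U₀-c)²k + εμ(U₀-c) + c²k in c has a non-real root if and only if (ε/(1+ε)²)·U₀(U₀ + μ/k) > (ε²/(1+ε)²)·μ²/(4k²) + (g/k)·(1-ε)/(1+ε). -/
/-- A real quadratic with positive leading coefficient has a root in `ℂ` with nonzero
imaginary part iff its discriminant is negative. -/
lemma quad_has_nonreal_root_iff (A B C : ℝ) (hA : 0 < A) :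
    (∃ c : ℂ, c.im ≠ 0 ∧ (A : ℂ) * c ^ 2 + (B : ℂ) * c + (C : ℂ) = 0) ↔
      B ^ 2 - 4 * A * C < 0 := by
  constructor
  · rintro ⟨c, hy, heq⟩
    have h1 := congrArg Complex.re heq
    have h2 := congrArg Complex.im heq
    simp [Complex.ext_iff, pow_two, Complex.mul_re, Complex.mul_im, Complex.add_re,
      Complex.add_im] at h1 h2
    set x := c.re
    set y := c.im
    have hy2 : 0 < y ^ 2 := by positivity
    -- from h2: (2Ax + B) * y = 0, hence 2Ax + B = 0
    have hx : 2 * A * x + B = 0 := by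
      have h2' : (2 * A * x + B) * y = 0 := by ring_nf; ring_nf at h2; linarith
      rcases mul_eq_zero.mp h2' with h | h
      · exact h
      · exact absurd h hy
    nlinarith [sq_nonneg y, sq_nonneg x, h1, hx, mul_pos hA hA]
  · intro hD
    have hA' : (0:ℝ) < 2 * A := by linarith
    have hpos : 0 < 4 * A * C - B ^ 2 := by linarith
    set t : ℝ := Real.sqrt (4 * A * C - B ^ 2) / (2 * A) with ht
    have htpos : 0 < t := div_pos (Real.sqrt_pos.mpr hpos) hA'
    have hts : (2 * A * t) ^ 2 = 4 * A * C - B ^ 2 := by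
      have : 2 * A * t = Real.sqrt (4 * A * C - B ^ 2) := by
        rw [ht, mul_div_assoc']; exact mul_div_cancel_left₀ _ hA'.ne'
      rw [this, Real.sq_sqrt hpos.le]
    refine ⟨⟨-B / (2 * A), t⟩, by simpa using htpos.ne', ?_⟩
    have hre : A * ((-B / (2 * A)) * (-B / (2 * A)) - t * t) + B * (-B / (2 * A)) + C = 0 := by
      have h2A : (2 * A) ≠ 0 := hA'.ne'
      field_simp
      nlinarith [hts]
    have him : A * ((-B / (2 * A)) * t + t * (-B / (2 * A))) + B * t = 0 := by
      have h2A : (2 * A) ≠ 0 := hA'.ne'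
      field_simp
      ring
    simp [Complex.ext_iff, pow_two, Complex.mul_re, Complex.mul_im, Complex.add_re,
      Complex.add_im]
    constructor
    · linarith [hre]
    · linarith [him]

/-- Instability criterion for a constant-shear wind with a vortex sheet (σ = 0, infinite
depths): the quadratic `g(1-ε) = ε(U₀-c)²k + εμ(U₀-c) + c²k` has a non-real root iff
`(ε/(1+ε)²)·U₀(U₀+μ/k) > (ε²/(1+ε)²)·μ²/(4k²) + (g/k)·(1-ε)/(1+ε)`. -/
theorem constant_shear_vortex_sheet_criterion (g k ε U₀ μ : ℝ)
    (hg : 0 < g) (hk : 0 < k) (hε : 0 < ε) (hε1 : ε ≤ 1) (hU₀ : 0 ≤ U₀) :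
    (∃ c : ℂ, c.im ≠ 0 ∧
        ((g * (1 - ε) : ℝ) : ℂ)
          = (ε : ℂ) * ((U₀ : ℂ) - c) ^ 2 * (k : ℂ) + (ε : ℂ) * (μ : ℂ) * ((U₀ : ℂ) - c)
              + c ^ 2 * (k : ℂ)) ↔
      ε / (1 + ε) ^ 2 * (U₀ * (U₀ + μ / k))
        > ε ^ 2 / (1 + ε) ^ 2 * (μ ^ 2 / (4 * k ^ 2)) + g / k * ((1 - ε) / (1 + ε)) := by
  set A : ℝ := k * (1 + ε) with hAdef
  set B : ℝ := -(2 * ε * k * U₀ + ε * μ) with hBdef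
  set C : ℝ := ε * k * U₀ ^ 2 + ε * μ * U₀ - g * (1 - ε) with hCdef
  have hA : 0 < A := by rw [hAdef]; positivity
  have step1 : (∃ c : ℂ, c.im ≠ 0 ∧
        ((g * (1 - ε) : ℝ) : ℂ)
          = (ε : ℂ) * ((U₀ : ℂ) - c) ^ 2 * (k : ℂ) + (ε : ℂ) * (μ : ℂ) * ((U₀ : ℂ) - c)
              + c ^ 2 * (k : ℂ)) ↔
      (∃ c : ℂ, c.im ≠ 0 ∧ (A : ℂ) * c ^ 2 + (B : ℂ) * c + (C : ℂ) = 0) := by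
    apply exists_congr; intro c
    apply and_congr_right; intro _
    constructor
    · intro h
      rw [hAdef, hBdef, hCdef]
      push_cast at h ⊢
      linear_combination -h
    · intro h
      rw [hAdef, hBdef, hCdef] at h
      push_cast at h ⊢
      linear_combination -h
  rw [step1, quad_has_nonreal_root_iff A B C hA]
  have hk2 : (0:ℝ) < 4 * k ^ 2 * (1 + ε) ^ 2 := by positivity
  have e1 : ε / (1 + ε) ^ 2 * (U₀ * (U₀ + μ / k))
      = (4 * k * ε * U₀ * (k * U₀ + μ)) / (4 * k ^ 2 * (1 + ε) ^ 2) := by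
    field_simp
  have e2 : ε ^ 2 / (1 + ε) ^ 2 * (μ ^ 2 / (4 * k ^ 2)) + g / k * ((1 - ε) / (1 + ε))
      = (ε ^ 2 * μ ^ 2 + 4 * g * k * (1 - ε) * (1 + ε)) / (4 * k ^ 2 * (1 + ε) ^ 2) := by
    field_simp
  have hD : B ^ 2 - 4 * A * C
      = -(4 * ε * k ^ 2 * U₀ ^ 2 + 4 * ε * k * μ * U₀ - ε ^ 2 * μ ^ 2 - 4 * g * k * (1 - ε ^ 2)) := by
    rw [hAdef, hBdef, hCdef]; ring
  rw [e1, e2, gt_iff_lt, div_lt_div_iff₀ hk2 hk2, mul_lt_mul_iff_left₀ hk2, hD]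
  constructor <;> intro h <;> nlinarith [h]
end

section
/- Fix α ∈ (0,1), C₀ ≥ 1, and m > 0. There exists a constant C > 0 depending only on α, C₀, m such that for all c_I ∈ ℝ and all τ', τ'', τ''' ∈ ℝ with |τ'|, |τ''| ≤ C₀|τ'''|, one has ∫_{τ'}^{τ''} |log((c_I² + τ'''²)/(c_I² + τ²))|^m dτ ≤ C (c_I² + τ'''²)^{(1-α)/2} |τ' - τ''|^α. -/
open intervalIntegral
open Real

-- subadditivity of rpow for exponent in (0,1]
lemma my_rpow_add_le {x y p : ℝ} (hx : 0 ≤ x) (hy : 0 ≤ y) (hp : 0 ≤ p) (hp1 : p ≤ 1) :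
    (x + y) ^ p ≤ x ^ p + y ^ p := by
  have h := NNReal.rpow_add_le_add_rpow x.toNNReal y.toNNReal hp hp1
  have h2 := NNReal.coe_le_coe.2 h
  push_cast at h2
  rwa [Real.coe_toNNReal x hx, Real.coe_toNNReal y hy] at h2

lemma my_rpow_sub_le {x y p : ℝ} (hx : 0 ≤ x) (hy : 0 ≤ y) (hp : 0 < p) (hp1 : p ≤ 1) :
    x ^ p - y ^ p ≤ |x - y| ^ p := by
  rcases le_total x y with h | h
  · have : x ^ p ≤ y ^ p := Real.rpow_le_rpow hx h hp.le
    have : (0:ℝ) ≤ |x - y| ^ p := Real.rpow_nonneg (abs_nonneg _) _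
    linarith
  · have hxy : x = y + (x - y) := by ring
    have h2 : x ^ p ≤ y ^ p + (x - y) ^ p := by
      calc x ^ p = (y + (x - y)) ^ p := by rw [← hxy]
        _ ≤ y ^ p + (x - y) ^ p := my_rpow_add_le hy (by linarith) hp.le hp1
    rw [abs_of_nonneg (by linarith)]
    linarith

-- log⁺ bound
lemma my_log_bound {β x : ℝ} (hβ : 0 < β) (hx : 0 < x) :
    max 0 (Real.log x) ≤ β⁻¹ * x ^ β := by
  rcases le_or_gt (Real.log x) 0 with h | h
  · rw [max_eq_left h]
    positivity
  · rw [max_eq_right h.le]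
    have hlog : Real.log x = β⁻¹ * Real.log (x ^ β) := by
      rw [Real.log_rpow hx]; field_simp
    rw [hlog]
    have : Real.log (x ^ β) ≤ x ^ β := (Real.log_le_sub_one_of_pos (Real.rpow_pos_of_pos hx β)).trans (by linarith)
    exact mul_le_mul_of_nonneg_left this (by positivity)

-- (x+y)^m ≤ 2^m (x^m + y^m) for m > 0
lemma my_rpow_add_le' {x y m : ℝ} (hx : 0 ≤ x) (hy : 0 ≤ y) (hm : 0 < m) :
    (x + y) ^ m ≤ 2 ^ m * (x ^ m + y ^ m) := by
  have h1 : x + y ≤ 2 * max x y := by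
    rcases max_cases x y with ⟨h, h'⟩ | ⟨h, h'⟩ <;> (rw [h]; linarith)
  calc (x + y) ^ m ≤ (2 * max x y) ^ m :=
        Real.rpow_le_rpow (by positivity) h1 hm.le
    _ = 2 ^ m * (max x y) ^ m := Real.mul_rpow (by norm_num) (le_max_iff.2 (Or.inl hx))
    _ ≤ 2 ^ m * (x ^ m + y ^ m) := by
        gcongr 2 ^ m * ?_
        rcases max_cases x y with ⟨h, _⟩ | ⟨h, _⟩ <;> rw [h]
        · nlinarith [Real.rpow_nonneg hy m]
        · nlinarith [Real.rpow_nonneg hx m]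

lemma my_intInt_abs_rpow {r : ℝ} (hr : -1 < r) (a b : ℝ) :
    IntervalIntegrable (fun x => |x| ^ r) MeasureTheory.volume a b := by
  suffices h : ∀ c : ℝ, 0 ≤ c → IntervalIntegrable (fun x => |x| ^ r) MeasureTheory.volume 0 c by
    have h' : ∀ c : ℝ, IntervalIntegrable (fun x => |x| ^ r) MeasureTheory.volume 0 c := by
      intro c
      rcases le_total 0 c with hc | hc
      · exact h c hc
      · rw [IntervalIntegrable.iff_comp_neg]
        simp only [abs_neg, neg_zero]
        exact h (-c) (by linarith)
    exact (h' a).symm.trans (h' b)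
  intro c hc
  rw [intervalIntegrable_iff]
  apply (intervalIntegrable_rpow' (a := 0) (b := c) hr).def'.congr_fun _ measurableSet_uIoc
  intro x hx
  rw [Set.uIoc_of_le hc] at hx
  dsimp only
  rw [abs_of_pos hx.1]

lemma my_int_abs_rpow {α : ℝ} (hα : 0 < α) (hα1 : α < 1) (b : ℝ) :
    ∫ τ in (0:ℝ)..b, |τ| ^ (α - 1) =
      if 0 ≤ b then |b| ^ α / α else -(|b| ^ α / α) := by
  have key : ∀ c : ℝ, 0 ≤ c → ∫ τ in (0:ℝ)..c, |τ| ^ (α - 1) = c ^ α / α := by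
    intro c hc
    have h1 : ∫ τ in (0:ℝ)..c, |τ| ^ (α - 1) = ∫ τ in (0:ℝ)..c, τ ^ (α - 1) := by
      apply intervalIntegral.integral_congr
      intro x hx
      rw [Set.uIcc_of_le hc] at hx
      rcases eq_or_lt_of_le hx.1 with h | h
      · rw [← h]
        simp [Real.zero_rpow (by linarith : α - 1 ≠ 0)]
      · dsimp only
        rw [abs_of_pos h]
    rw [h1, integral_rpow (Or.inl (by linarith))]
    rw [Real.zero_rpow (by linarith : α - 1 + 1 ≠ 0)]
    ring_nf
  rcases le_or_gt 0 b with hb | hb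
  · rw [if_pos hb, key b hb, abs_of_nonneg hb]
  · rw [if_neg (not_le.2 hb)]
    have h2 : ∫ τ in b..(0:ℝ), |τ| ^ (α - 1) = ∫ τ in (0:ℝ)..(-b), |τ| ^ (α - 1) := by
      have h3 := intervalIntegral.integral_comp_neg (a := (0:ℝ)) (b := -b)
        (fun τ => |τ| ^ (α - 1))
      simp only [abs_neg, neg_neg, neg_zero] at h3
      exact h3.symm
    rw [intervalIntegral.integral_symm, h2, key (-b) (by linarith), abs_of_neg hb]

lemma my_F_bound {α : ℝ} (hα : 0 < α) (hα1 : α < 1) (a b : ℝ) :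
    |(if 0 ≤ b then |b| ^ α / α else -(|b| ^ α / α)) -
      (if 0 ≤ a then |a| ^ α / α else -(|a| ^ α / α))| ≤ 2 * |b - a| ^ α / α := by
  have hsub : ∀ x y : ℝ, |(|x| ^ α) - |y| ^ α| ≤ |x - y| ^ α := by
    intro x y
    rw [abs_sub_le_iff]
    constructor
    · exact (my_rpow_sub_le (abs_nonneg x) (abs_nonneg y) hα hα1.le).trans
        (Real.rpow_le_rpow (abs_nonneg _) (abs_abs_sub_abs_le_abs_sub x y) hα.le)
    · refine (my_rpow_sub_le (abs_nonneg y) (abs_nonneg x) hα hα1.le).trans ?_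
      rw [abs_sub_comm x y]
      exact Real.rpow_le_rpow (abs_nonneg _) (abs_abs_sub_abs_le_abs_sub y x) hα.le
  have hr : (0:ℝ) ≤ |b - a| ^ α := Real.rpow_nonneg (abs_nonneg _) _
  have hsame : |(|b| ^ α) - |a| ^ α| / α ≤ 2 * |b - a| ^ α / α := by
    exact div_le_div_of_nonneg_right (le_trans (hsub b a) (by linarith)) hα.le
  rcases le_or_gt 0 a with ha | ha <;> rcases le_or_gt 0 b with hb | hb
  · rw [if_pos ha, if_pos hb, div_sub_div_same, abs_div, abs_of_pos hα]
    exact hsame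
  · -- a ≥ 0, b < 0 : opposite signs
    rw [if_pos ha, if_neg (not_le.2 hb)]
    have hab : b - a < 0 := by linarith
    have h1 : |b| ^ α ≤ |b - a| ^ α :=
      Real.rpow_le_rpow (abs_nonneg _) (by rw [abs_of_neg hb, abs_of_neg hab]; linarith) hα.le
    have h2 : |a| ^ α ≤ |b - a| ^ α :=
      Real.rpow_le_rpow (abs_nonneg _) (by rw [abs_of_nonneg ha, abs_of_neg hab]; linarith) hα.le
    have hb' : (0:ℝ) ≤ |b| ^ α := Real.rpow_nonneg (abs_nonneg _) _
    have ha' : (0:ℝ) ≤ |a| ^ α := Real.rpow_nonneg (abs_nonneg _) _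
    calc |(-(|b| ^ α / α)) - |a| ^ α / α| = (|b| ^ α + |a| ^ α) / α := by
          rw [abs_of_nonpos (by
            have h3 := div_nonneg hb' hα.le
            have h4 := div_nonneg ha' hα.le
            linarith)]
          ring
      _ ≤ (2 * |b - a| ^ α) / α := by
          apply div_le_div_of_nonneg_right ?_ hα.le
          linarith
      _ = 2 * |b - a| ^ α / α := by ring
  · -- a < 0, b ≥ 0
    rw [if_neg (not_le.2 ha), if_pos hb]
    have hab : 0 < b - a := by linarith
    have h1 : |b| ^ α ≤ |b - a| ^ α :=
      Real.rpow_le_rpow (abs_nonneg _) (by rw [abs_of_nonneg hb, abs_of_pos hab]; linarith) hα.le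
    have h2 : |a| ^ α ≤ |b - a| ^ α :=
      Real.rpow_le_rpow (abs_nonneg _) (by rw [abs_of_neg ha, abs_of_pos hab]; linarith) hα.le
    have hb' : (0:ℝ) ≤ |b| ^ α := Real.rpow_nonneg (abs_nonneg _) _
    have ha' : (0:ℝ) ≤ |a| ^ α := Real.rpow_nonneg (abs_nonneg _) _
    calc |(|b| ^ α / α) - -(|a| ^ α / α)| = (|b| ^ α + |a| ^ α) / α := by
          rw [sub_neg_eq_add, abs_of_nonneg (by positivity)]
          ring
      _ ≤ (2 * |b - a| ^ α) / α := by
          apply div_le_div_of_nonneg_right ?_ hα.le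
          linarith
      _ = 2 * |b - a| ^ α / α := by ring
  · rw [if_neg (not_le.2 ha), if_neg (not_le.2 hb), neg_sub_neg, div_sub_div_same, abs_div,
      abs_of_pos hα]
    calc |(|a| ^ α) - |b| ^ α| / α ≤ |a - b| ^ α / α := by
          apply div_le_div_of_nonneg_right (hsub a b) hα.le
      _ ≤ 2 * |b - a| ^ α / α := by
          rw [abs_sub_comm a b]
          have : (0:ℝ) ≤ |b - a| ^ α := hr
          apply div_le_div_of_nonneg_right ?_ hα.le
          linarith

set_option maxHeartbeats 2000000 in
/-- The key integral inequality near a critical layer: for `|τ'|, |τ''| ≤ C₀|τ'''|`,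
`∫_{τ'}^{τ''} |log((c_I²+τ'''²)/(c_I²+τ²))|^m dτ ≤ C (c_I²+τ'''²)^{(1-α)/2} |τ'-τ''|^α`,
with `C` depending only on `α ∈ (0,1)`, `C₀ ≥ 1` and `m > 0`. -/
theorem log_integral_holder_bound (α C₀ m : ℝ)
    (hα : α ∈ Set.Ioo (0 : ℝ) 1) (hC₀ : 1 ≤ C₀) (hm : 0 < m) :
    ∃ C > 0, ∀ (cI τ' τ'' τ''' : ℝ), |τ'| ≤ C₀ * |τ'''| → |τ''| ≤ C₀ * |τ'''| →
      (∫ τ in τ'..τ'', |Real.log ((cI ^ 2 + τ''' ^ 2) / (cI ^ 2 + τ ^ 2))| ^ m)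
        ≤ C * (cI ^ 2 + τ''' ^ 2) ^ ((1 - α) / 2) * |τ' - τ''| ^ α := by
  obtain ⟨hα0, hα1⟩ := hα
  have h1α : 0 < 1 - α := by linarith
  set K : ℝ := 4 ^ m * (m / (1 - α)) ^ m with hKdef
  set B : ℝ := 4 ^ m * |Real.log C₀| ^ m with hBdef
  have hK0 : 0 < K := by
    apply mul_pos (Real.rpow_pos_of_pos (by norm_num) m)
      (Real.rpow_pos_of_pos (by positivity) m)
  have hB0 : 0 ≤ B :=
    mul_nonneg (Real.rpow_nonneg (by norm_num) m) (Real.rpow_nonneg (abs_nonneg _) m)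
  have hC₀0 : 0 < C₀ := by linarith
  refine ⟨B * (2 * C₀) ^ (1 - α) + 2 * K / α, by positivity, ?_⟩
  intro cI τ' τ'' τ''' h1 h2
  rcases eq_or_ne τ' τ'' with rfl | hne
  · rw [intervalIntegral.integral_same, sub_self, abs_zero,
      Real.zero_rpow hα0.ne', mul_zero]
  set A : ℝ := cI ^ 2 + τ''' ^ 2 with hA
  have hA0 : 0 ≤ A := by positivity
  rcases eq_or_lt_of_le hA0 with hAz | hApos
  · exfalso
    have hc3 : τ''' = 0 := by nlinarith [sq_nonneg cI, sq_nonneg τ''']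
    rw [hc3, abs_zero, mul_zero] at h1 h2
    have ht1 : τ' = 0 := abs_eq_zero.1 (le_antisymm h1 (abs_nonneg _))
    have ht2 : τ'' = 0 := abs_eq_zero.1 (le_antisymm h2 (abs_nonneg _))
    exact hne (ht1.trans ht2.symm)
  -- main case: A > 0
  set s : ℝ := A ^ ((1:ℝ)/2) with hsdef
  have hs0 : 0 < s := Real.rpow_pos_of_pos hApos _
  have hsq : s ^ (2:ℕ) = A := by
    rw [hsdef, ← Real.rpow_natCast (A ^ ((1:ℝ)/2)) 2, ← Real.rpow_mul hA0]
    norm_num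
  have hs1α : s ^ (1 - α) = A ^ ((1 - α) / 2) := by
    rw [hsdef, ← Real.rpow_mul hA0]
    congr 1
    ring
  have hτ3 : |τ'''| ≤ s := by
    have h : |τ'''| ^ (2:ℕ) ≤ s ^ (2:ℕ) := by
      rw [hsq, sq_abs]
      nlinarith [sq_nonneg cI]
    exact (pow_le_pow_iff_left₀ (abs_nonneg _) hs0.le two_ne_zero).1 h
  set L : ℝ := |τ' - τ''| with hLdef
  have hL0 : 0 < L := abs_pos.2 (sub_ne_zero.2 hne)
  have hLle : L ≤ 2 * C₀ * s := by
    calc L ≤ |τ'| + |τ''| := abs_sub τ' τ''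
      _ ≤ C₀ * |τ'''| + C₀ * |τ'''| := add_le_add h1 h2
      _ = 2 * C₀ * |τ'''| := by ring
      _ ≤ 2 * C₀ * s := by
          apply mul_le_mul_of_nonneg_left hτ3 (by positivity)
  -- the dominating function
  set K2 : ℝ := K * s ^ (1 - α) with hK2def
  have hK20 : 0 ≤ K2 := mul_nonneg hK0.le (Real.rpow_nonneg hs0.le _)
  have hint_abs : IntervalIntegrable (fun τ : ℝ => |τ| ^ (α - 1)) MeasureTheory.volume τ' τ'' :=
    my_intInt_abs_rpow (by linarith) τ' τ''
  have hgint : IntervalIntegrable (fun τ : ℝ => B + K2 * |τ| ^ (α - 1))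
      MeasureTheory.volume τ' τ'' :=
    (_root_.intervalIntegrable_const).add (hint_abs.const_mul K2)
  -- pointwise bound
  have hpt : ∀ τ : ℝ, τ ∈ Set.uIoc τ' τ'' → τ ≠ 0 →
      |Real.log (A / (cI ^ 2 + τ ^ 2))| ^ m ≤ B + K2 * |τ| ^ (α - 1) := by
    intro τ hτmem hτ0
    have hτa : 0 < |τ| := abs_pos.2 hτ0
    have hτsq : 0 < τ ^ 2 := by positivity
    set D : ℝ := cI ^ 2 + τ ^ 2 with hDdef
    have hD0 : 0 < D := by positivity
    have hτle : |τ| ≤ C₀ * |τ'''| := by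
      rcases Set.mem_uIoc.1 hτmem with ⟨ha, hb⟩ | ⟨ha, hb⟩
      · exact le_trans (abs_le_max_abs_abs ha.le hb) (max_le h1 h2)
      · exact le_trans (abs_le_max_abs_abs ha.le hb) (max_le h2 h1)
    have hτsq' : τ ^ 2 ≤ C₀ ^ 2 * τ''' ^ 2 := by
      have h := mul_self_le_mul_self (abs_nonneg τ) hτle
      calc τ ^ 2 = |τ| * |τ| := by rw [abs_mul_abs_self]; ring
        _ ≤ (C₀ * |τ'''|) * (C₀ * |τ'''|) := h
        _ = C₀ ^ 2 * τ''' ^ 2 := by rw [mul_mul_mul_comm, abs_mul_abs_self]; ring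
    have hC₀sq : (1:ℝ) ≤ C₀ ^ 2 := by nlinarith
    have hDA : D ≤ C₀ ^ 2 * A := by
      have hcc : cI ^ 2 ≤ C₀ ^ 2 * cI ^ 2 := by nlinarith [sq_nonneg cI, hC₀sq]
      have hexp : C₀ ^ 2 * A = C₀ ^ 2 * cI ^ 2 + C₀ ^ 2 * τ''' ^ 2 := by rw [hA]; ring
      rw [hDdef, hexp]
      linarith [hτsq']
    have hDτ : τ ^ 2 ≤ D := by rw [hDdef]; linarith [sq_nonneg cI]
    have hC₀log : 0 ≤ Real.log C₀ := Real.log_nonneg hC₀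
    set M : ℝ := max 0 (Real.log (s / |τ|)) with hMdef
    have hM0 : 0 ≤ M := le_max_left _ _
    -- key logarithm bound
    have key1 : |Real.log (A / D)| ≤ 2 * Real.log C₀ + 2 * M := by
      have hlog : Real.log (A / D) = Real.log A - Real.log D :=
        Real.log_div hApos.ne' hD0.ne'
      have hA2 : Real.log A = 2 * Real.log s := by
        rw [← hsq, Real.log_pow]; push_cast; ring
      have hτ2 : Real.log (τ ^ 2) = 2 * Real.log |τ| := by
        rw [Real.log_pow, Real.log_abs]; push_cast; ring
      have hsdiv : Real.log (s / |τ|) = Real.log s - Real.log |τ| :=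
        Real.log_div hs0.ne' (abs_ne_zero.2 hτ0)
      have hup : Real.log A - Real.log D ≤ 2 * M := by
        have hlogD : Real.log (τ ^ 2) ≤ Real.log D := Real.log_le_log hτsq hDτ
        have hMge : Real.log (s / |τ|) ≤ M := le_max_right _ _
        linarith
      have hdown : Real.log D - Real.log A ≤ 2 * Real.log C₀ := by
        have hlogD2 : Real.log D ≤ Real.log (C₀ ^ 2 * A) := Real.log_le_log hD0 hDA
        have hmul : Real.log (C₀ ^ 2 * A) = Real.log (C₀ ^ 2) + Real.log A :=
          Real.log_mul (by positivity) hApos.ne'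
        have hc2 : Real.log (C₀ ^ 2) = 2 * Real.log C₀ := by
          rw [Real.log_pow]; push_cast; ring
        linarith
      rw [abs_le]
      constructor <;> rw [hlog] <;> linarith
    -- convert to rpow bound
    have step1 : |Real.log (A / D)| ^ m ≤ (2 * Real.log C₀ + 2 * M) ^ m :=
      Real.rpow_le_rpow (abs_nonneg _) key1 hm.le
    have step2 : (2 * Real.log C₀ + 2 * M) ^ m
        ≤ 2 ^ m * ((2 * Real.log C₀) ^ m + (2 * M) ^ m) := by
      have := my_rpow_add_le' (x := 2 * Real.log C₀) (y := 2 * M)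
        (by linarith) (by linarith) hm
      exact this
    have e1 : (2 * Real.log C₀) ^ m = 2 ^ m * Real.log C₀ ^ m :=
      Real.mul_rpow (by norm_num) hC₀log
    have e2 : (2 * M) ^ m = 2 ^ m * M ^ m := Real.mul_rpow (by norm_num) hM0
    -- bound M ^ m
    have hβ : (0:ℝ) < (1 - α) / m := by positivity
    have hx0 : (0:ℝ) < s / |τ| := by positivity
    have step3 : M ^ m ≤ (((1 - α) / m)⁻¹ * (s / |τ|) ^ ((1 - α) / m)) ^ m :=
      Real.rpow_le_rpow hM0 (my_log_bound hβ hx0) hm.le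
    have e3 : (((1 - α) / m)⁻¹ * (s / |τ|) ^ ((1 - α) / m)) ^ m
        = (m / (1 - α)) ^ m * (s / |τ|) ^ (1 - α) := by
      rw [Real.mul_rpow (by positivity) (Real.rpow_nonneg hx0.le _),
        ← Real.rpow_mul hx0.le]
      congr 1
      · rw [inv_div]
      · congr 1
        field_simp
    have e4 : (s / |τ|) ^ (1 - α) = s ^ (1 - α) * |τ| ^ (α - 1) := by
      rw [Real.div_rpow hs0.le (abs_nonneg τ), div_eq_mul_inv,
        ← Real.rpow_neg (abs_nonneg τ)]
      congr 1
      ring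
    have e24 : (2:ℝ) ^ m * (2:ℝ) ^ m = 4 ^ m := by
      rw [← Real.mul_rpow (by norm_num) (by norm_num)]
      norm_num
    have habs : |Real.log C₀| ^ m = Real.log C₀ ^ m := by rw [abs_of_nonneg hC₀log]
    have h2m : (0:ℝ) ≤ 2 ^ m := Real.rpow_nonneg (by norm_num) m
    have hMm : M ^ m ≤ (m / (1 - α)) ^ m * (s ^ (1 - α) * |τ| ^ (α - 1)) := by
      rw [← e4, ← e3]
      exact step3
    calc |Real.log (A / D)| ^ m ≤ 2 ^ m * ((2 * Real.log C₀) ^ m + (2 * M) ^ m) :=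
          step1.trans step2
      _ = 2 ^ m * 2 ^ m * Real.log C₀ ^ m + 2 ^ m * 2 ^ m * M ^ m := by
          rw [e1, e2]; ring
      _ ≤ 2 ^ m * 2 ^ m * Real.log C₀ ^ m
          + 2 ^ m * 2 ^ m * ((m / (1 - α)) ^ m * (s ^ (1 - α) * |τ| ^ (α - 1))) := by
          exact add_le_add le_rfl (mul_le_mul_of_nonneg_left hMm (mul_nonneg h2m h2m))
      _ = B + K2 * |τ| ^ (α - 1) := by
          rw [hBdef, hK2def, hKdef, e24, habs]; ring
  -- a.e. bound on the interval
  have haeb : ∀ᵐ τ ∂(MeasureTheory.volume.restrict (Set.uIoc τ' τ'')),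
      ‖|Real.log (A / (cI ^ 2 + τ ^ 2))| ^ m‖ ≤ B + K2 * |τ| ^ (α - 1) := by
    have hmem : ∀ᵐ τ ∂(MeasureTheory.volume.restrict (Set.uIoc τ' τ'')),
        τ ∈ Set.uIoc τ' τ'' := MeasureTheory.ae_restrict_mem measurableSet_uIoc
    have hne0 : ∀ᵐ (τ : ℝ) ∂(MeasureTheory.volume.restrict (Set.uIoc τ' τ'')), τ ≠ 0 := by
      apply MeasureTheory.ae_restrict_of_ae
      refine MeasureTheory.ae_iff.2 ?_
      have hset : {τ : ℝ | ¬τ ≠ 0} = {0} := by ext x; simp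
      rw [hset]
      exact MeasureTheory.measure_singleton 0
    filter_upwards [hmem, hne0] with τ hτmem hτ0
    rw [Real.norm_eq_abs, abs_of_nonneg (Real.rpow_nonneg (abs_nonneg _) m)]
    exact hpt τ hτmem hτ0
  -- bound the integral by the integral of g
  have hbound : (∫ τ in τ'..τ'', |Real.log (A / (cI ^ 2 + τ ^ 2))| ^ m)
      ≤ |∫ τ in τ'..τ'', (B + K2 * |τ| ^ (α - 1))| := by
    refine le_trans (le_abs_self _) ?_
    rw [← Real.norm_eq_abs (∫ τ in τ'..τ'', |Real.log (A / (cI ^ 2 + τ ^ 2))| ^ m)]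
    exact intervalIntegral.norm_integral_le_abs_of_norm_le haeb hgint
  -- compute the integral of g
  have hsplit : (∫ τ in τ'..τ'', |τ| ^ (α - 1))
      = (∫ τ in (0:ℝ)..τ'', |τ| ^ (α - 1)) - ∫ τ in (0:ℝ)..τ', |τ| ^ (α - 1) := by
    have hadd := intervalIntegral.integral_add_adjacent_intervals
      (my_intInt_abs_rpow (show (-1:ℝ) < α - 1 by linarith) τ' 0)
      (my_intInt_abs_rpow (show (-1:ℝ) < α - 1 by linarith) 0 τ'')
    rw [intervalIntegral.integral_symm 0 τ'] at hadd
    linarith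
  have hgval : (∫ τ in τ'..τ'', (B + K2 * |τ| ^ (α - 1)))
      = B * (τ'' - τ') + K2 * ((∫ τ in (0:ℝ)..τ'', |τ| ^ (α - 1))
          - ∫ τ in (0:ℝ)..τ', |τ| ^ (α - 1)) := by
    rw [intervalIntegral.integral_add _root_.intervalIntegrable_const (hint_abs.const_mul K2),
      intervalIntegral.integral_const, intervalIntegral.integral_const_mul, hsplit]
    simp [smul_eq_mul, mul_comm]
  -- the F-bound
  have hF : |(∫ τ in (0:ℝ)..τ'', |τ| ^ (α - 1)) - ∫ τ in (0:ℝ)..τ', |τ| ^ (α - 1)|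
      ≤ 2 * L ^ α / α := by
    rw [my_int_abs_rpow hα0 hα1 τ'', my_int_abs_rpow hα0 hα1 τ']
    have hFb := my_F_bound hα0 hα1 τ' τ''
    rwa [show |τ'' - τ'| = L by rw [hLdef, abs_sub_comm]] at hFb
  have habsg : |∫ τ in τ'..τ'', (B + K2 * |τ| ^ (α - 1))|
      ≤ B * L + K2 * (2 * L ^ α / α) := by
    rw [hgval]
    calc |B * (τ'' - τ') + K2 * ((∫ τ in (0:ℝ)..τ'', |τ| ^ (α - 1))
          - ∫ τ in (0:ℝ)..τ', |τ| ^ (α - 1))|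
        ≤ |B * (τ'' - τ')| + |K2 * ((∫ τ in (0:ℝ)..τ'', |τ| ^ (α - 1))
          - ∫ τ in (0:ℝ)..τ', |τ| ^ (α - 1))| := abs_add_le _ _
      _ ≤ B * L + K2 * (2 * L ^ α / α) := by
          rw [abs_mul B (τ'' - τ'), abs_mul K2 _, abs_of_nonneg hB0, abs_of_nonneg hK20]
          have h1' : |τ'' - τ'| = L := by rw [hLdef, abs_sub_comm]
          rw [h1']
          exact add_le_add le_rfl (mul_le_mul_of_nonneg_left hF hK20)
  -- final assembly
  have hLsplit : L = L ^ (1 - α) * L ^ α := by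
    rw [← Real.rpow_add hL0]
    norm_num
  have hL1α : L ^ (1 - α) ≤ (2 * C₀) ^ (1 - α) * s ^ (1 - α) := by
    rw [← Real.mul_rpow (by positivity) hs0.le]
    exact Real.rpow_le_rpow (abs_nonneg _) hLle h1α.le
  have hLα0 : (0:ℝ) ≤ L ^ α := Real.rpow_nonneg hL0.le _
  calc (∫ τ in τ'..τ'', |Real.log (A / (cI ^ 2 + τ ^ 2))| ^ m)
      ≤ B * L + K2 * (2 * L ^ α / α) := hbound.trans habsg
    _ = B * (L ^ (1 - α) * L ^ α) + (2 * K / α) * s ^ (1 - α) * L ^ α := by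
        rw [← hLsplit, hK2def]; ring
    _ ≤ B * ((2 * C₀) ^ (1 - α) * s ^ (1 - α) * L ^ α)
        + (2 * K / α) * s ^ (1 - α) * L ^ α := by
        exact add_le_add
          (mul_le_mul_of_nonneg_left (mul_le_mul_of_nonneg_right hL1α hLα0) hB0) le_rfl
    _ = (B * (2 * C₀) ^ (1 - α) + 2 * K / α) * A ^ ((1 - α) / 2) * L ^ α := by
        rw [← hs1α]; ring
end

section
/- Let g, k > 0. Suppose μ > 0 and x₂* > 0 are such that β := μx₂*[1 - (1 - e^{-2kx₂*})/(2kx₂*)] equals √(g/k). Define α := μx₂* - (μ/(2k))(1 + e^{-2kx₂*}) and f(c,ε) := (c - √(g/k))(c² - (εμ/k)c - (g/k)(1-ε)) + εc²(c - α). Then f(√(g/k), 0) = 0, ∂_c f(√(g/k), 0) = 0, ∂_c² f(√(g/k), 0) = 4√(g/k) > 0, and ∂_ε f(√(g/k), 0) = (gμ/k²)e^{-2kx₂*} > 0. -/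
open Real

/-- Degeneracy structure of the dispersion-relation polynomial for the piecewise-linear
wind profile: `c = √(g/k)` is a double root of `f(·,0)` with `∂²_c f = 4√(g/k) > 0` and
`∂_ε f = (gμ/k²)e^{-2kx₂*} > 0`. -/
theorem piecewise_linear_dispersion_double_root (g k μ x₂s : ℝ)
    (hg : 0 < g) (hk : 0 < k) (hμ : 0 < μ) (hx : 0 < x₂s)
    (hβ : μ * x₂s * (1 - (1 - Real.exp (-2 * k * x₂s)) / (2 * k * x₂s)) = Real.sqrt (g / k))
    (α : ℝ) (hα : α = μ * x₂s - μ / (2 * k) * (1 + Real.exp (-2 * k * x₂s)))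
    (f : ℝ → ℝ → ℝ)
    (hf : ∀ c ε, f c ε = (c - Real.sqrt (g / k))
        * (c ^ 2 - ε * μ / k * c - g / k * (1 - ε)) + ε * c ^ 2 * (c - α)) :
    f (Real.sqrt (g / k)) 0 = 0 ∧
    deriv (fun c => f c 0) (Real.sqrt (g / k)) = 0 ∧
    deriv (deriv (fun c => f c 0)) (Real.sqrt (g / k)) = 4 * Real.sqrt (g / k) ∧
    0 < 4 * Real.sqrt (g / k) ∧
    deriv (fun ε => f (Real.sqrt (g / k)) ε) 0 = g * μ / k ^ 2 * Real.exp (-2 * k * x₂s) ∧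
    0 < g * μ / k ^ 2 * Real.exp (-2 * k * x₂s) := by
  set s := Real.sqrt (g / k) with hs
  have hgk : 0 < g / k := div_pos hg hk
  have hs0 : 0 < s := Real.sqrt_pos.mpr hgk
  have hs2 : s ^ 2 = g / k := Real.sq_sqrt hgk.le
  have h1 : ∀ c, f c 0 = c ^ 3 - s * c ^ 2 - s ^ 2 * c + s ^ 3 := by
    intro c
    rw [hf, hs2.symm]; ring
  have hd1 : ∀ c : ℝ, HasDerivAt (fun c => f c 0) (3 * c ^ 2 - 2 * s * c - s ^ 2) c := by
    intro c
    have : HasDerivAt (fun c : ℝ => c ^ 3 - s * c ^ 2 - s ^ 2 * c + s ^ 3)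
        (3 * c ^ 2 - 2 * s * c - s ^ 2) c := by
      have h := (((hasDerivAt_pow 3 c).sub ((hasDerivAt_pow 2 c).const_mul s)).sub
        ((hasDerivAt_id c).const_mul (s ^ 2))).add_const (s ^ 3)
      exact h.congr_deriv (by ring)
    exact this.congr_of_eventuallyEq (Filter.Eventually.of_forall fun x => (h1 x))
  have hderiv1 : deriv (fun c => f c 0) = fun c => 3 * c ^ 2 - 2 * s * c - s ^ 2 :=
    funext fun c => (hd1 c).deriv
  have hd2 : HasDerivAt (fun c : ℝ => 3 * c ^ 2 - 2 * s * c - s ^ 2) (6 * s - 2 * s) s := by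
    have h := (((hasDerivAt_pow 2 s).const_mul 3).sub ((hasDerivAt_id s).const_mul (2 * s))).sub_const (s ^ 2)
    exact h.congr_deriv (by ring)
  have hε : ∀ ε : ℝ, f s ε = ε * (s ^ 2 * (s - α)) := by
    intro ε; rw [hf]; ring
  have hexp : Real.exp (-2 * k * x₂s) = Real.exp (-2 * k * x₂s) := rfl
  have hsval : s = μ * x₂s - μ * (1 - Real.exp (-2 * k * x₂s)) / (2 * k) := by
    rw [← hβ]; field_simp
  have hsa : s ^ 2 * (s - α) = g * μ / k ^ 2 * Real.exp (-2 * k * x₂s) := by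
    rw [hs2, hα, hsval]; field_simp; ring
  refine ⟨?_, ?_, ?_, by positivity, ?_, by positivity⟩
  · rw [h1]; ring
  · rw [(hd1 s).deriv]; ring
  · rw [hderiv1, hd2.deriv]; ring
  · have : deriv (fun ε => f s ε) 0 = s ^ 2 * (s - α) := by
      have h : (fun ε => f s ε) = fun ε => ε * (s ^ 2 * (s - α)) := funext hε
      rw [h, deriv_mul_const_field']; simp
    rw [this, hsa]
end

section
/- Let g, k, μ, x₂* > 0 with β := μx₂*[1 - (1-e^{-2kx₂*})/(2kx₂*)] = √(g/k), and set α := μx₂* - (μ/(2k))(1+e^{-2kx₂*}), f(c,ε) := (c - √(g/k))(c² - (εμ/k)c - (g/k)(1-ε)) + εc²(c-α). Then there exist ε₀ > 0 and C > 0 such that for all ε ∈ (0, ε₀), the cubic f(·,ε) has a root c ∈ ℂ with Im c > 0 and |c - √(g/k)| ≤ C√ε. -/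
set_option maxHeartbeats 1000000


/-- Existence of an unstable root: for the piecewise-linear wind profile dispersion
polynomial `f(c,ε)`, for all small `ε > 0` there is a root `c` with `Im c > 0` and
`|c - √(g/k)| ≤ C√ε`. -/
theorem piecewise_linear_unstable_root (g k μ x₂s : ℝ)
    (hg : 0 < g) (hk : 0 < k) (hμ : 0 < μ) (hx : 0 < x₂s)
    (hβ : μ * x₂s * (1 - (1 - Real.exp (-2 * k * x₂s)) / (2 * k * x₂s)) = Real.sqrt (g / k))
    (α : ℝ) (hα : α = μ * x₂s - μ / (2 * k) * (1 + Real.exp (-2 * k * x₂s))) :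
    ∃ ε₀ > 0, ∃ C > 0, ∀ ε : ℝ, ε ∈ Set.Ioo 0 ε₀ →
      ∃ c : ℂ,
        (c - (Real.sqrt (g / k) : ℝ))
            * (c ^ 2 - ((ε * μ / k : ℝ) : ℂ) * c - ((g / k * (1 - ε) : ℝ) : ℂ))
          + (ε : ℂ) * c ^ 2 * (c - (α : ℝ)) = 0 ∧
        0 < c.im ∧
        ‖c - (Real.sqrt (g / k) : ℝ)‖ ≤ C * Real.sqrt ε := by
  have hk0 : k ≠ 0 := ne_of_gt hk
  have hx0 : x₂s ≠ 0 := ne_of_gt hx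
  set c₀ := Real.sqrt (g / k) with hc₀def
  have hgk : 0 < g / k := div_pos hg hk
  have hc₀pos : 0 < c₀ := Real.sqrt_pos.mpr hgk
  have hc₀sq : c₀ ^ 2 = g / k := by rw [hc₀def]; exact Real.sq_sqrt hgk.le
  have hc₀ne : c₀ ≠ 0 := ne_of_gt hc₀pos
  clear_value c₀
  have hgap : c₀ - α = μ / k * Real.exp (-2 * k * x₂s) := by
    rw [← hβ, hα]; field_simp; ring
  have hgap_pos : 0 < c₀ - α := by
    rw [hgap]; positivity
  set A := c₀ ^ 2 * (c₀ - α) with hA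
  have hApos : 0 < A := mul_pos (pow_pos hc₀pos 2) hgap_pos
  clear_value A
  set B := 3 * c₀ - α - μ / k with hB
  set D := 4 * c₀ ^ 2 - μ * c₀ / k - 2 * c₀ * α with hD
  clear_value B D
  set K := (3 * c₀ * |D| + A) / c₀ ^ 2 with hK
  have h3cD : 0 ≤ 3 * c₀ * |D| := by positivity
  have hKpos : 0 < K := div_pos (by linarith) (pow_pos hc₀pos 2)
  clear_value K
  have hBnn : 0 ≤ |B| * c₀ ^ 2 := mul_nonneg (abs_nonneg B) (sq_nonneg c₀)
  have hDnn : 0 ≤ |D| * c₀ := mul_nonneg (abs_nonneg D) hc₀pos.le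
  set S₂ := |B| * c₀ ^ 2 + |D| * c₀ + A + 1 with hS₂
  set S₃ := 9 * (|B| * c₀ ^ 2) + 3 * (|D| * c₀) + A + 1 with hS₃
  clear_value S₂ S₃
  have hS₂pos : 0 < S₂ := by rw [hS₂]; linarith
  have hS₃pos : 0 < S₃ := by rw [hS₃]; linarith
  have hK1 : (0:ℝ) < K ^ 2 + 1 := by positivity
  set ε₀ := min (1/2) (min (c₀ ^ 3 / (2 * S₂)) (min (9 * c₀ ^ 3 / S₃) (8 * A / (9 * c₀ * (K ^ 2 + 1))))) with hε₀
  have hε₀pos : 0 < ε₀ := by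
    refine lt_min (by norm_num) (lt_min (div_pos (by positivity) (by linarith)) (lt_min (div_pos (by positivity) hS₃pos) (div_pos (by linarith) (by positivity))))
  clear_value ε₀
  set C := Real.sqrt (A / c₀) with hC
  have hCpos : 0 < C := Real.sqrt_pos.mpr (div_pos hApos hc₀pos)
  have hCsq : C ^ 2 = A / c₀ := by rw [hC]; exact Real.sq_sqrt (div_pos hApos hc₀pos).le
  clear_value C
  refine ⟨ε₀, hε₀pos, C, hCpos, ?_⟩
  rintro ε ⟨hε0, hεlt⟩
  rw [hε₀] at hεlt
  have hεhalf : ε < 1/2 := lt_of_lt_of_le hεlt (min_le_left _ _)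
  have hε2 : ε < c₀ ^ 3 / (2 * S₂) :=
    lt_of_lt_of_le hεlt (le_trans (min_le_right _ _) (min_le_left _ _))
  have hε3 : ε < 9 * c₀ ^ 3 / S₃ :=
    lt_of_lt_of_le hεlt (le_trans (min_le_right _ _) (le_trans (min_le_right _ _) (min_le_left _ _)))
  have hε4 : ε < 8 * A / (9 * c₀ * (K ^ 2 + 1)) :=
    lt_of_lt_of_le hεlt (le_trans (min_le_right _ _) (le_trans (min_le_right _ _) (min_le_right _ _)))
  set δ := Real.sqrt ε with hδ
  have hδpos : 0 < δ := Real.sqrt_pos.mpr hε0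
  have hδne : δ ≠ 0 := ne_of_gt hδpos
  have hδsq : δ ^ 2 = ε := by rw [hδ]; exact Real.sq_sqrt hε0.le
  clear_value δ
  set a₃ := δ * (1 + ε) with ha₃
  set a₂ := 2 * c₀ + ε * B with ha₂
  set a₁ := δ * D with ha₁
  clear_value a₃ a₂ a₁
  have ha₃pos : 0 < a₃ := by rw [ha₃]; exact mul_pos hδpos (by linarith)
  have ha₃ne : a₃ ≠ 0 := ne_of_gt ha₃pos
  -- the scaled cubic
  set F : ℝ → ℝ := fun x => a₃ * x ^ 3 + a₂ * x ^ 2 + a₁ * x + A with hF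
  clear_value F
  have hab : (-(3 * c₀)) / δ ≤ (-c₀) / δ := by
    rw [div_le_div_iff₀ hδpos hδpos]
    nlinarith only [mul_pos hc₀pos hδpos]
  have key_a : ε * F ((-(3 * c₀)) / δ) = (-9 - 27 * ε) * c₀ ^ 3 + ε * (9 * B * c₀ ^ 2 - 3 * D * c₀ + A) := by
    simp only [hF]
    rw [ha₃, ha₂, ha₁, ← hδsq]
    field_simp
    ring
  have key_b : ε * F ((-c₀) / δ) = (1 - ε) * c₀ ^ 3 + ε * (B * c₀ ^ 2 - D * c₀ + A) := by
    simp only [hF]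
    rw [ha₃, ha₂, ha₁, ← hδsq]
    field_simp
    ring
  have hBb : ε * (B * c₀ ^ 2) ≤ ε * (|B| * c₀ ^ 2) := by
    nlinarith only [mul_nonneg (mul_nonneg (sub_nonneg.mpr (le_abs_self B)) hε0.le) (sq_nonneg c₀)]
  have hBb' : ε * (-B * c₀ ^ 2) ≤ ε * (|B| * c₀ ^ 2) := by
    nlinarith only [mul_nonneg (mul_nonneg (by linarith only [neg_abs_le B] : (0:ℝ) ≤ |B| + B) hε0.le) (sq_nonneg c₀)]
  have hDb : ε * (D * c₀) ≤ ε * (|D| * c₀) := by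
    nlinarith only [mul_nonneg (mul_nonneg (sub_nonneg.mpr (le_abs_self D)) hε0.le) hc₀pos.le]
  have hDb' : ε * (-D * c₀) ≤ ε * (|D| * c₀) := by
    nlinarith only [mul_nonneg (mul_nonneg (by linarith only [neg_abs_le D] : (0:ℝ) ≤ |D| + D) hε0.le) hc₀pos.le]
  have hεS₂ : ε * S₂ < c₀ ^ 3 / 2 := by
    have h := (lt_div_iff₀ (by linarith only [hS₂pos] : (0:ℝ) < 2 * S₂)).mp hε2
    linarith only [h]
  have hεS₃ : ε * S₃ < 9 * c₀ ^ 3 := (lt_div_iff₀ hS₃pos).mp hε3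
  have hfa : F ((-(3 * c₀)) / δ) ≤ 0 := by
    have hεS₃' : ε * (9 * (|B| * c₀ ^ 2) + 3 * (|D| * c₀) + A + 1) < 9 * c₀ ^ 3 := by
      rw [hS₃] at hεS₃; linarith only [hεS₃]
    nlinarith only [key_a, hε0, hBb, hDb', hεS₃', mul_nonneg hε0.le hApos.le,
      mul_nonneg hε0.le (pow_pos hc₀pos 3).le]
  have hfb : 0 ≤ F ((-c₀) / δ) := by
    have hεS₂' : ε * (|B| * c₀ ^ 2 + |D| * c₀ + A + 1) < c₀ ^ 3 / 2 := by
      rw [hS₂] at hεS₂; linarith only [hεS₂]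
    nlinarith only [key_b, hε0, hBb', hDb, hεS₂', mul_nonneg hε0.le hApos.le,
      mul_nonneg (by linarith only [hεhalf] : (0:ℝ) ≤ 1/2 - ε) (pow_pos hc₀pos 3).le]
  have hcF : Continuous F := by rw [hF]; fun_prop
  have hmem : (0:ℝ) ∈ Set.Icc (F ((-(3 * c₀)) / δ)) (F ((-c₀) / δ)) := ⟨hfa, hfb⟩
  obtain ⟨r, hrmem, hHr0⟩ := intermediate_value_Icc hab hcF.continuousOn hmem
  have hHr : a₃ * r ^ 3 + a₂ * r ^ 2 + a₁ * r + A = 0 := by simpa [hF] using hHr0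
  have hr1 : (-(3 * c₀)) / δ ≤ r := hrmem.1
  have hr2 : r ≤ (-c₀) / δ := hrmem.2
  have hrneg : r < 0 := by
    have h0 : 0 < c₀ / δ := div_pos hc₀pos hδpos
    have h1 : (-c₀) / δ = -(c₀ / δ) := by ring
    rw [h1] at hr2
    linarith only [hr2, h0]
  have hrne : r ≠ 0 := ne_of_lt hrneg
  have hδr_lb : c₀ ≤ δ * (-r) := by
    have h' : c₀ / δ ≤ -r := by linarith only [hr2, (by ring : (-c₀) / δ = -(c₀ / δ))]
    calc c₀ = (c₀ / δ) * δ := by field_simp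
    _ ≤ (-r) * δ := mul_le_mul_of_nonneg_right h' hδpos.le
    _ = δ * (-r) := by ring
  have hδr_ub : δ * (-r) ≤ 3 * c₀ := by
    have h' : -r ≤ 3 * c₀ / δ := by linarith only [hr1, (by ring : (-(3 * c₀)) / δ = -(3 * c₀ / δ))]
    calc δ * (-r) ≤ δ * (3 * c₀ / δ) := mul_le_mul_of_nonneg_left h' hδpos.le
    _ = 3 * c₀ := by field_simp
  have hmrpos : 0 < -r := by nlinarith only [hδr_lb, hc₀pos, hδpos]
  have hNpos : 0 < a₃ * (-r) := mul_pos ha₃pos hmrpos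
  have hNlb : c₀ ≤ a₃ * (-r) := by
    rw [ha₃]
    nlinarith only [hδr_lb, mul_nonneg hε0.le (le_trans hc₀pos.le hδr_lb)]
  have hNub : a₃ * (-r) ≤ (9/2) * c₀ := by
    rw [ha₃]
    have h5 : ε * (δ * (-r)) ≤ (1/2) * (3 * c₀) :=
      mul_le_mul hεhalf.le hδr_ub (le_trans hc₀pos.le hδr_lb) (by norm_num)
    nlinarith only [hδr_ub, h5]
  set q := A / (a₃ * (-r)) with hqdef
  have hqpos : 0 < q := div_pos hApos hNpos
  clear_value q
  have hq_ub : q ≤ A / c₀ := by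
    rw [hqdef, div_le_div_iff₀ hNpos hc₀pos]
    nlinarith only [hApos, hNlb]
  have hq_lb : A ≤ 9/2 * (q * c₀) := by
    have hqN : q * (a₃ * -r) = A := by rw [hqdef]; field_simp
    nlinarith only [hqN, hNub, hqpos]
  set p := r + a₂ / a₃ with hpdef
  clear_value p
  have hf1 : a₃ * p = a₃ * r + a₂ := by rw [hpdef]; field_simp
  have hf2 : a₃ * r * q = -A := by
    rw [hqdef]; field_simp
  have hp_eq : a₃ * r ^ 2 * p = -(a₁ * r + A) := by linear_combination r ^ 2 * hf1 + hHr
  have hf3 : a₃ * (q - p * r) = a₁ := by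
    apply mul_right_cancel₀ hrne
    linear_combination hf2 - r ^ 2 * hf1 - hHr
  have habs1 : |a₁ * r| ≤ 3 * c₀ * |D| := by
    rw [ha₁, abs_mul, abs_mul, abs_of_pos hδpos, abs_of_neg hrneg]
    nlinarith only [mul_le_mul_of_nonneg_left hδr_ub (abs_nonneg D)]
  have habs : |a₁ * r + A| ≤ K * c₀ ^ 2 := by
    have hKc : K * c₀ ^ 2 = 3 * c₀ * |D| + A := by rw [hK]; field_simp
    rw [hKc]
    calc |a₁ * r + A| ≤ |a₁ * r| + |A| := abs_add_le _ _
    _ ≤ 3 * c₀ * |D| + A := by rw [abs_of_pos hApos]; linarith only [habs1]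
  have h8 : (a₁ * r + A) ^ 2 ≤ (K * c₀ ^ 2) ^ 2 := by
    obtain ⟨hL, hR⟩ := abs_le.mp habs
    exact sq_le_sq' hL hR
  have h7 : (a₃ * r ^ 2 * p) ^ 2 = (a₁ * r + A) ^ 2 := by rw [hp_eq]; ring
  have h11 : (a₃ * r ^ 2 * p) ^ 2 ≤ K ^ 2 * c₀ ^ 4 := by nlinarith only [h7, h8]
  have h9 : c₀ ^ 2 ≤ δ ^ 2 * r ^ 2 := by
    nlinarith only [mul_self_le_mul_self hc₀pos.le hδr_lb]
  have h9' : c₀ ^ 4 ≤ (δ ^ 2 * r ^ 2) ^ 2 := by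
    nlinarith only [mul_self_le_mul_self (sq_nonneg c₀) h9]
  have h10 : c₀ ^ 4 ≤ ε * (a₃ * r ^ 2) ^ 2 := by
    rw [ha₃, ← hδsq]
    nlinarith only [h9', sq_nonneg (δ ^ 3 * r ^ 2), sq_nonneg (δ ^ 4 * r ^ 2)]
  have hp_sq : p ^ 2 ≤ K ^ 2 * ε := by
    nlinarith only [h11, h10, sq_nonneg p, hε0.le, pow_pos hc₀pos 4]
  have hpq : p ^ 2 < 4 * q := by
    have h12 : (K ^ 2 + 1) * ε * (9 * c₀) < 8 * A := by
      have h := (lt_div_iff₀ (by positivity : (0:ℝ) < 9 * c₀ * (K ^ 2 + 1))).mp hε4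
      linarith only [h]
    nlinarith only [hp_sq, h12, hq_lb, hε0, hc₀pos]
  set s := Real.sqrt (4 * q - p ^ 2) with hs
  have hspos : 0 < s := Real.sqrt_pos.mpr (by linarith only [hpq])
  have hssq : s ^ 2 = 4 * q - p ^ 2 := by rw [hs]; exact Real.sq_sqrt (by linarith only [hpq])
  clear_value s
  set z : ℂ := ((-p/2 : ℝ) : ℂ) + ((s/2 : ℝ) : ℂ) * Complex.I with hz
  clear_value z
  have hssqC : (s : ℂ) ^ 2 = 4 * (q : ℂ) - (p : ℂ) ^ 2 := by exact_mod_cast hssq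
  have hzq : z ^ 2 + (p : ℂ) * z + (q : ℂ) = 0 := by
    rw [hz]
    push_cast
    linear_combination (Complex.I ^ 2 / 4) * hssqC + ((4 * (q:ℂ) - (p:ℂ) ^ 2) / 4) * Complex.I_sq
  refine ⟨(c₀ : ℝ) + (δ : ℝ) * z, ?_, ?_, ?_⟩
  · -- root equation
    have hδsqC : ((δ : ℝ) : ℂ) ^ 2 = ((ε : ℝ) : ℂ) := by exact_mod_cast hδsq
    have h1 : ((ε * μ / k : ℝ) : ℂ) = (ε : ℂ) * (μ : ℂ) / (k : ℂ) := by push_cast; ring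
    have h2 : ((g / k * (1 - ε) : ℝ) : ℂ) = (c₀ : ℂ) ^ 2 * (1 - (ε : ℂ)) := by
      rw [← hc₀sq]; push_cast; ring
    have ha₃C : ((a₃ : ℝ) : ℂ) = (δ : ℂ) * (1 + (ε : ℂ)) := by rw [ha₃]; push_cast; ring
    have ha₂C : ((a₂ : ℝ) : ℂ) = 2 * (c₀ : ℂ) + (ε : ℂ) * (3 * (c₀ : ℂ) - (α : ℂ) - (μ : ℂ) / (k : ℂ)) := by
      rw [ha₂, hB]; push_cast; ring
    have ha₁C : ((a₁ : ℝ) : ℂ) = (δ : ℂ) * (4 * (c₀ : ℂ) ^ 2 - (μ : ℂ) * (c₀ : ℂ) / (k : ℂ) - 2 * (c₀ : ℂ) * (α : ℂ)) := by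
      rw [ha₁, hD]; push_cast; ring
    have hAC : ((A : ℝ) : ℂ) = (c₀ : ℂ) ^ 2 * ((c₀ : ℂ) - (α : ℂ)) := by
      rw [hA]; push_cast; ring
    have hf1C : ((a₃ : ℝ) : ℂ) * (p : ℂ) = ((a₃ : ℝ) : ℂ) * (r : ℂ) + ((a₂ : ℝ) : ℂ) := by
      exact_mod_cast hf1
    have hf2C : ((a₃ : ℝ) : ℂ) * (r : ℂ) * (q : ℂ) = -((A : ℝ) : ℂ) := by exact_mod_cast hf2
    have hf3C : ((a₃ : ℝ) : ℂ) * ((q : ℂ) - (p : ℂ) * (r : ℂ)) = ((a₁ : ℝ) : ℂ) := by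
      exact_mod_cast hf3
    have step1 : ((c₀ : ℝ) + (δ : ℝ) * z - ((c₀ : ℝ) : ℂ))
        * (((c₀ : ℝ) + (δ : ℝ) * z) ^ 2 - ((ε * μ / k : ℝ) : ℂ) * ((c₀ : ℝ) + (δ : ℝ) * z)
            - ((g / k * (1 - ε) : ℝ) : ℂ))
          + (ε : ℂ) * ((c₀ : ℝ) + (δ : ℝ) * z) ^ 2 * ((c₀ : ℝ) + (δ : ℝ) * z - ((α : ℝ) : ℂ))
        = (ε : ℂ) * (((a₃ : ℝ) : ℂ) * z ^ 3 + ((a₂ : ℝ) : ℂ) * z ^ 2 + ((a₁ : ℝ) : ℂ) * z + ((A : ℝ) : ℂ)) := by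
      rw [h1, h2, ha₃C, ha₂C, ha₁C, hAC]
      linear_combination ((δ:ℂ) * (1 + (ε:ℂ)) * z ^ 3
        + (2 * (c₀:ℂ) + (ε:ℂ) * (3 * (c₀:ℂ) - (α:ℂ) - (μ:ℂ) / (k:ℂ))) * z ^ 2) * hδsqC
    have step2 : ((a₃ : ℝ) : ℂ) * z ^ 3 + ((a₂ : ℝ) : ℂ) * z ^ 2 + ((a₁ : ℝ) : ℂ) * z + ((A : ℝ) : ℂ)
        = ((a₃ : ℝ) : ℂ) * ((z - (r : ℂ)) * (z ^ 2 + (p : ℂ) * z + (q : ℂ))) := by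
      linear_combination (-(z ^ 2)) * hf1C - z * hf3C + hf2C
    linear_combination step1 + (ε : ℂ) * step2 + (ε : ℂ) * ((a₃ : ℝ) : ℂ) * (z - (r : ℂ)) * hzq
  · -- positive imaginary part
    have him : (((c₀ : ℝ) : ℂ) + ((δ : ℝ) : ℂ) * z).im = δ * (s / 2) := by
      rw [hz]
      simp
    rw [him]
    exact mul_pos hδpos (by linarith only [hspos])
  · -- distance bound
    have hceq : ((c₀ : ℝ) : ℂ) + ((δ : ℝ) : ℂ) * z - ((c₀ : ℝ) : ℂ) = ((δ : ℝ) : ℂ) * z := by ring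
    rw [hceq, norm_mul, Complex.norm_real, Real.norm_eq_abs, abs_of_pos hδpos]
    have h12 : ‖z‖ ^ 2 = q := by
      rw [Complex.sq_norm, Complex.normSq_apply, hz]
      simp only [Complex.add_re, Complex.add_im, Complex.mul_re, Complex.mul_im,
        Complex.ofReal_re, Complex.ofReal_im, Complex.I_re, Complex.I_im]
      linear_combination hssq / 4
    have h13 : ‖z‖ ^ 2 ≤ C ^ 2 := by
      rw [h12, hCsq]; exact hq_ub
    have habsz : ‖z‖ ≤ C := by
      nlinarith only [h13, norm_nonneg z, hCpos]
    nlinarith only [habsz, hδpos]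
end
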